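/- Let K be a field of characteristic zero and let \lambda_0, \lambda_1, \lambda_2 ∈ K be pairwise distinct and nonzero with s_1 = \lambda_0+\lambda_1+\lambda_2 ≠ 0, s_2 = \lambda_0\lambda_1+\lambda_1\lambda_2+\lambda_2\lambda_0, s_3 = \lambda_0\lambda_1\lambda_2, satisfying s_2^2 = 3 s_1 s_3. Fix i ∈ {0,1,2} and define the rational functions in x: A_{00} = s_1·( s_1 s_2^3 + (-4 s_1^2 s_2^2 + 3 s_2^3) x + (-s_1^3 s_2 + 12 s_1 s_2^2) x^2 + (11 s_1^4 - 36 s_1^2 s_2) x^3 ) / ( 9 (s_1 x - s_2)^5 ); A_{01} = -s_1·( s_2^3 - 4 s_1 s_2^2 x + (3 s_1^2 s_2 + 9 s_2^2) x^2 + (3 s_1^3 - 21 s_1 s_2) x^3 + 3 s_1^2 x^4 ) / ( 3 (s_1 x - s_2)^4 ); A_{02} = -( s_2^3 - 5 s_1 s_2^2 x + 9 s_1^2 s_2 x^2 + (-6 s_1^3 - 3 s_1 s_2) x^3 + 6 s_1^2 x^4 ) / ( 3 (s_1 x - s_2)^3 ); A_{10} = s_1^2 x · P(x) / ( 27 (s_1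 x - s_2)^9 ) and A_{11} = -s_1 x · P(x) / ( 27 (s_1 x - s_2)^8 ), where P(x) = (8 s_1^2 s_2^5 - 21 s_2^6) + (-48 s_1^3 s_2^4 + 126 s_1 s_2^5) x + (120 s_1^4 s_2^3 - 315 s_1^2 s_2^4) x^2 + (-124 s_1^5 s_2^2 + 264 s_1^3 s_2^3 + 144 s_1 s_2^4) x^3 + (12 s_1^6 s_2 + 153 s_1^4 s_2^2 - 432 s_1^2 s_2^3) x^4 + (60 s_1^7 - 342 s_1^5 s_2 + 432 s_1^3 s_2^2) x^5 + (-33 s_1^6 + 108 s_1^4 s_2) x^6; A_{12} = s_1·( -s_2^6 + 9 s_1 s_2^5 x + (-32 s_1^2 s_2^4 - 9 s_2^5) x^2 + (57 s_1^3 s_2^3 + 60 s_1 s_2^4) x^3 + (-48 s_1^4 s_2^2 - 171 s_1^2 s_2^3) x^4 + (9 s_1^5 s_2 + 237 s_1^3 s_2^2 + 27 s_1 s_2^3) x^5 + (9 s_1^6 - 144 s_1^4 s_2 - 90 s_1^2 s_2^2) x^6 + (9 s_1^5 + 108 s_1^3 s_2) x^7 - 18 s_1^4 x^8 ) / ( 9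 (s_1 x - s_2)^7 ); A_{13} = -( (3 x^2 s_1^2 - 3 x s_1 s_2 + s_2^2)·(-3 x^3 s_1 + 3 x^2 s_1^2 - 3 x s_1 s_2 + s_2^2)^2 ) / ( 27 (s_1 x - s_2)^6 ). Since s_1\lambda_i - s_2 ≠ 0, the ring K[x][(s_1 x - s_2)^{-1}] embeds into K[[x - \lambda_i]]. Then for any sequence (\Phi_p)_{p≥0} in K[[x - \lambda_i]] with \Phi_0 = 1 and \Phi_j = 0 for j < 0, satisfying for all p ≥ 1: d\Phi_p/dx = A_{00}\Phi_{p-1} + A_{01}\Phi_{p-1}' + A_{02}\Phi_{p-1}'' + A_{10}\Phi_{p-2} + A_{11}\Phi_{p-2}' + A_{12}\Phi_{p-2}'' + A_{13}\Phi_{p-2}''' (primes denoting d/dx), every \Phi_p lies in the subring K[x][(s_1 x - s_2)^{-1}] of K[[x - \lambda_i]]. -/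

import Mathlib

open PowerSeries

noncomputable section

/-- The element `x = λᵢ + X` of `K[[X]] = K[[x - λᵢ]]`. -/
def xAt (K : Type*) [Field K] (c : K) : K⟦X⟧ := PowerSeries.X + PowerSeries.C (R := K) c

/-- `s₁x - s₂`, viewed in `K[[x - λᵢ]]`. -/
def fP2 (K : Type*) [Field K] (c s1 s2 : K) : K⟦X⟧ :=
  PowerSeries.C (R := K) s1 * xAt K c - PowerSeries.C (R := K) s2

/-- `A₀₀ = s₁(s₁s₂³ + (-4s₁²s₂² + 3s₂³)x + (-s₁³s₂ + 12s₁s₂²)x² + (11s₁⁴ - 36s₁²s₂)x³)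
  / (9(s₁x - s₂)⁵)`. -/
def A00P2 (K : Type*) [Field K] (c s1 s2 : K) : K⟦X⟧ :=
  PowerSeries.C (R := K) s1 *
  (PowerSeries.C (R := K) (s1 * s2 ^ 3) +
    PowerSeries.C (R := K) (-4 * s1 ^ 2 * s2 ^ 2 + 3 * s2 ^ 3) * xAt K c +
    PowerSeries.C (R := K) (-(s1 ^ 3 * s2) + 12 * s1 * s2 ^ 2) * xAt K c ^ 2 +
    PowerSeries.C (R := K) (11 * s1 ^ 4 - 36 * s1 ^ 2 * s2) * xAt K c ^ 3) *
  (PowerSeries.C (R := K) 9 * fP2 K c s1 s2 ^ 5)⁻¹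

/-- `A₀₁ = -s₁(s₂³ - 4s₁s₂²x + (3s₁²s₂ + 9s₂²)x² + (3s₁³ - 21s₁s₂)x³ + 3s₁²x⁴)
  / (3(s₁x - s₂)⁴)`. -/
def A01P2 (K : Type*) [Field K] (c s1 s2 : K) : K⟦X⟧ :=
  PowerSeries.C (R := K) (-s1) *
  (PowerSeries.C (R := K) (s2 ^ 3) +
    PowerSeries.C (R := K) (-4 * (s1 * s2 ^ 2)) * xAt K c +
    PowerSeries.C (R := K) (3 * s1 ^ 2 * s2 + 9 * s2 ^ 2) * xAt K c ^ 2 +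
    PowerSeries.C (R := K) (3 * s1 ^ 3 - 21 * s1 * s2) * xAt K c ^ 3 +
    PowerSeries.C (R := K) (3 * s1 ^ 2) * xAt K c ^ 4) *
  (PowerSeries.C (R := K) 3 * fP2 K c s1 s2 ^ 4)⁻¹

/-- `A₀₂ = -(s₂³ - 5s₁s₂²x + 9s₁²s₂x² + (-6s₁³ - 3s₁s₂)x³ + 6s₁²x⁴) / (3(s₁x - s₂)³)`. -/
def A02P2 (K : Type*) [Field K] (c s1 s2 : K) : K⟦X⟧ :=
  -(PowerSeries.C (R := K) (s2 ^ 3) +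
    PowerSeries.C (R := K) (-5 * (s1 * s2 ^ 2)) * xAt K c +
    PowerSeries.C (R := K) (9 * s1 ^ 2 * s2) * xAt K c ^ 2 +
    PowerSeries.C (R := K) (-6 * s1 ^ 3 - 3 * s1 * s2) * xAt K c ^ 3 +
    PowerSeries.C (R := K) (6 * s1 ^ 2) * xAt K c ^ 4) *
  (PowerSeries.C (R := K) 3 * fP2 K c s1 s2 ^ 3)⁻¹

/-- The degree-six polynomial `P(x)` appearing in `A₁₀` and `A₁₁`. -/
def PP2 (K : Type*) [Field K] (c s1 s2 : K) : K⟦X⟧ :=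
  PowerSeries.C (R := K) (8 * s1 ^ 2 * s2 ^ 5 - 21 * s2 ^ 6) +
  PowerSeries.C (R := K) (-48 * s1 ^ 3 * s2 ^ 4 + 126 * s1 * s2 ^ 5) * xAt K c +
  PowerSeries.C (R := K) (120 * s1 ^ 4 * s2 ^ 3 - 315 * s1 ^ 2 * s2 ^ 4) * xAt K c ^ 2 +
  PowerSeries.C (R := K) (-124 * s1 ^ 5 * s2 ^ 2 + 264 * s1 ^ 3 * s2 ^ 3 + 144 * s1 * s2 ^ 4) *
    xAt K c ^ 3 +
  PowerSeries.C (R := K) (12 * s1 ^ 6 * s2 + 153 * s1 ^ 4 * s2 ^ 2 - 432 * s1 ^ 2 * s2 ^ 3) *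
    xAt K c ^ 4 +
  PowerSeries.C (R := K) (60 * s1 ^ 7 - 342 * s1 ^ 5 * s2 + 432 * s1 ^ 3 * s2 ^ 2) * xAt K c ^ 5 +
  PowerSeries.C (R := K) (-33 * s1 ^ 6 + 108 * s1 ^ 4 * s2) * xAt K c ^ 6

/-- `A₁₀ = s₁²·x·P(x) / (27(s₁x - s₂)⁹)`. -/
def A10P2 (K : Type*) [Field K] (c s1 s2 : K) : K⟦X⟧ :=
  PowerSeries.C (R := K) (s1 ^ 2) * xAt K c * PP2 K c s1 s2 *
    (PowerSeries.C (R := K) 27 * fP2 K c s1 s2 ^ 9)⁻¹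

/-- `A₁₁ = -s₁·x·P(x) / (27(s₁x - s₂)⁸)`. -/
def A11P2 (K : Type*) [Field K] (c s1 s2 : K) : K⟦X⟧ :=
  PowerSeries.C (R := K) (-s1) * xAt K c * PP2 K c s1 s2 *
    (PowerSeries.C (R := K) 27 * fP2 K c s1 s2 ^ 8)⁻¹

/-- `A₁₂ = s₁·(-s₂⁶ + 9s₁s₂⁵x + (-32s₁²s₂⁴ - 9s₂⁵)x² + (57s₁³s₂³ + 60s₁s₂⁴)x³
  + (-48s₁⁴s₂² - 171s₁²s₂³)x⁴ + (9s₁⁵s₂ + 237s₁³s₂² + 27s₁s₂³)x⁵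
  + (9s₁⁶ - 144s₁⁴s₂ - 90s₁²s₂²)x⁶ + (9s₁⁵ + 108s₁³s₂)x⁷ - 18s₁⁴x⁸) / (9(s₁x - s₂)⁷)`. -/
def A12P2 (K : Type*) [Field K] (c s1 s2 : K) : K⟦X⟧ :=
  PowerSeries.C (R := K) s1 *
  (PowerSeries.C (R := K) (-(s2 ^ 6)) +
    PowerSeries.C (R := K) (9 * s1 * s2 ^ 5) * xAt K c +
    PowerSeries.C (R := K) (-32 * s1 ^ 2 * s2 ^ 4 - 9 * s2 ^ 5) * xAt K c ^ 2 +
    PowerSeries.C (R := K) (57 * s1 ^ 3 * s2 ^ 3 + 60 * s1 * s2 ^ 4) * xAt K c ^ 3 +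
    PowerSeries.C (R := K) (-48 * s1 ^ 4 * s2 ^ 2 - 171 * s1 ^ 2 * s2 ^ 3) * xAt K c ^ 4 +
    PowerSeries.C (R := K) (9 * s1 ^ 5 * s2 + 237 * s1 ^ 3 * s2 ^ 2 + 27 * s1 * s2 ^ 3) *
      xAt K c ^ 5 +
    PowerSeries.C (R := K) (9 * s1 ^ 6 - 144 * s1 ^ 4 * s2 - 90 * s1 ^ 2 * s2 ^ 2) * xAt K c ^ 6 +
    PowerSeries.C (R := K) (9 * s1 ^ 5 + 108 * s1 ^ 3 * s2) * xAt K c ^ 7 -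
    PowerSeries.C (R := K) (18 * s1 ^ 4) * xAt K c ^ 8) *
  (PowerSeries.C (R := K) 9 * fP2 K c s1 s2 ^ 7)⁻¹

/-- `A₁₃ = -((3x²s₁² - 3xs₁s₂ + s₂²)·(-3x³s₁ + 3x²s₁² - 3xs₁s₂ + s₂²)²)
  / (27(s₁x - s₂)⁶)`. -/
def A13P2 (K : Type*) [Field K] (c s1 s2 : K) : K⟦X⟧ :=
  -((PowerSeries.C (R := K) (3 * s1 ^ 2) * xAt K c ^ 2 -
      PowerSeries.C (R := K) (3 * (s1 * s2)) * xAt K c + PowerSeries.C (R := K) (s2 ^ 2)) *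
    (PowerSeries.C (R := K) (-3 * s1) * xAt K c ^ 3 + PowerSeries.C (R := K) (3 * s1 ^ 2) * xAt K c ^ 2 -
      PowerSeries.C (R := K) (3 * (s1 * s2)) * xAt K c + PowerSeries.C (R := K) (s2 ^ 2)) ^ 2) *
  (PowerSeries.C (R := K) 27 * fP2 K c s1 s2 ^ 6)⁻¹


def gP2 (K : Type*) [Field K] (c s1 s2 : K) : K⟦X⟧ := (fP2 K c s1 s2)⁻¹

def SP2 (K : Type*) [Field K] (c s1 s2 : K) : Submodule K K⟦X⟧ :=
  Submodule.span K (Set.range fun k : ℕ => gP2 K c s1 s2 ^ k)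

def TP2 (K : Type*) [Field K] (c s1 s2 : K) : Submodule K K⟦X⟧ :=
  Submodule.span K (Set.range fun k : ℕ => gP2 K c s1 s2 ^ (k + 2))

set_option linter.unusedSectionVars false
set_option maxHeartbeats 1600000

section Aux
variable {K : Type*} [Field K] [CharZero K] {c s1 s2 : K}

lemma constantCoeff_fP2 : constantCoeff (R := K) (fP2 K c s1 s2) = s1 * c - s2 := by
  simp [fP2, xAt]

lemma fP2_mul_inv (hc : s1 * c - s2 ≠ 0) : fP2 K c s1 s2 * gP2 K c s1 s2 = 1 :=
  PowerSeries.mul_inv_cancel _ (by rw [constantCoeff_fP2]; exact hc)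

lemma inv_C_mul_pow (hc : s1 * c - s2 ≠ 0) {a : K} (ha : a ≠ 0) (n : ℕ) :
    (PowerSeries.C (R := K) a * fP2 K c s1 s2 ^ n)⁻¹ =
      PowerSeries.C (R := K) a⁻¹ * gP2 K c s1 s2 ^ n := by
  have hcc : constantCoeff (R := K) (PowerSeries.C (R := K) a * fP2 K c s1 s2 ^ n) ≠ 0 := by
    simp only [map_mul, map_pow, constantCoeff_C, constantCoeff_fP2]
    exact mul_ne_zero ha (pow_ne_zero _ hc)
  rw [PowerSeries.inv_eq_iff_mul_eq_one hcc]
  rw [mul_mul_mul_comm, ← map_mul, inv_mul_cancel₀ ha, map_one, one_mul, ← mul_pow,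
    mul_comm (gP2 K c s1 s2), fP2_mul_inv hc, one_pow]

lemma derivative_xAt : d⁄dX K (xAt K c) = 1 := by
  simp [xAt]

lemma derivative_C_mul (a : K) (y : K⟦X⟧) :
    d⁄dX K (PowerSeries.C (R := K) a * y) = PowerSeries.C (R := K) a * d⁄dX K y := by
  rw [← smul_eq_C_mul, ← smul_eq_C_mul, Derivation.map_smul]

lemma derivative_fP2 : d⁄dX K (fP2 K c s1 s2) = PowerSeries.C (R := K) s1 := by
  rw [fP2, map_sub, derivative_C, sub_zero, derivative_C_mul, derivative_xAt, mul_one]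

lemma derivative_gP2 (hc : s1 * c - s2 ≠ 0) :
    d⁄dX K (gP2 K c s1 s2) = PowerSeries.C (R := K) (-s1) * gP2 K c s1 s2 ^ 2 := by
  have h := congrArg (d⁄dX K) (fP2_mul_inv hc)
  rw [Derivation.leibniz, (d⁄dX K).map_one_eq_zero, smul_eq_mul, smul_eq_mul,
    derivative_fP2] at h
  have h2 := congrArg (gP2 K c s1 s2 * ·) h
  simp only [mul_add, mul_zero, ← mul_assoc] at h2
  rw [mul_comm (gP2 K c s1 s2) (fP2 K c s1 s2), fP2_mul_inv hc, one_mul] at h2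
  have := eq_neg_of_add_eq_zero_left h2
  rw [this]; ring_nf; rw [map_neg]; ring

lemma derivative_gP2_pow (hc : s1 * c - s2 ≠ 0) : ∀ m : ℕ,
    d⁄dX K (gP2 K c s1 s2 ^ (m + 1)) =
      PowerSeries.C (R := K) (-(((m : K) + 1) * s1)) * gP2 K c s1 s2 ^ (m + 1 + 1) := by
  intro m
  induction m with
  | zero =>
    rw [pow_one, derivative_gP2 hc]
    norm_num
  | succ m ih =>
    rw [pow_succ _ (m + 1), Derivation.leibniz, ih, derivative_gP2 hc, smul_eq_mul, smul_eq_mul]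
    simp only [map_neg, map_mul, map_add, map_one, map_natCast, Nat.cast_add, Nat.cast_one]
    ring

lemma one_mem_SP2 : (1 : K⟦X⟧) ∈ SP2 K c s1 s2 :=
  Submodule.subset_span ⟨0, pow_zero _⟩

lemma C_mem_SP2 (a : K) : PowerSeries.C (R := K) a ∈ SP2 K c s1 s2 := by
  have : PowerSeries.C (R := K) a = a • (1 : K⟦X⟧) := by rw [smul_eq_C_mul, mul_one]
  rw [this]
  exact Submodule.smul_mem _ _ one_mem_SP2

lemma TP2_mul_g {y : K⟦X⟧} (hy : y ∈ TP2 K c s1 s2) :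
    y * gP2 K c s1 s2 ∈ TP2 K c s1 s2 := by
  induction hy using Submodule.span_induction with
  | mem z hz =>
    obtain ⟨k, rfl⟩ := hz
    exact Submodule.subset_span ⟨k + 1, by ring⟩
  | zero => simpa using (TP2 K c s1 s2).zero_mem
  | add a b _ _ ha hb => rw [add_mul]; exact add_mem ha hb
  | smul r a _ ha => rw [smul_mul_assoc]; exact Submodule.smul_mem _ _ ha

lemma TP2_mul_gpow {y : K⟦X⟧} (hy : y ∈ TP2 K c s1 s2) (m : ℕ) :
    y * gP2 K c s1 s2 ^ m ∈ TP2 K c s1 s2 := by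
  induction m with
  | zero => simpa using hy
  | succ m ih =>
    have : y * gP2 K c s1 s2 ^ (m + 1) = y * gP2 K c s1 s2 ^ m * gP2 K c s1 s2 := by ring
    rw [this]; exact TP2_mul_g ih

lemma xAt_mul_g (hc : s1 * c - s2 ≠ 0) (hs1 : s1 ≠ 0) :
    xAt K c * gP2 K c s1 s2 =
      PowerSeries.C (R := K) s1⁻¹ + PowerSeries.C (R := K) (s1⁻¹ * s2) * gP2 K c s1 s2 := by
  have h : PowerSeries.C (R := K) s1 * (xAt K c * gP2 K c s1 s2) =
      PowerSeries.C (R := K) s1 *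
        (PowerSeries.C (R := K) s1⁻¹ + PowerSeries.C (R := K) (s1⁻¹ * s2) * gP2 K c s1 s2) := by
    have h1 : PowerSeries.C (R := K) s1 * xAt K c = fP2 K c s1 s2 + PowerSeries.C (R := K) s2 := by
      rw [fP2]; ring
    rw [← mul_assoc, h1, add_mul, fP2_mul_inv hc]
    rw [mul_add, ← map_mul, mul_inv_cancel₀ hs1, map_one, ← mul_assoc, ← map_mul,
      mul_inv_cancel_left₀ hs1]
  have hC : (PowerSeries.C (R := K) s1) ≠ 0 := by
    simpa using hs1
  exact mul_left_cancel₀ hC h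

lemma xAt_pow_mul_gpow_mem (hc : s1 * c - s2 ≠ 0) (hs1 : s1 ≠ 0) :
    ∀ (d k : ℕ), xAt K c ^ d * gP2 K c s1 s2 ^ (d + 2 + k) ∈ TP2 K c s1 s2 := by
  intro d
  induction d with
  | zero =>
    intro k
    refine Submodule.subset_span ⟨k, ?_⟩
    rw [pow_zero, one_mul]
    have e : (0:ℕ) + 2 + k = k + 2 := by omega
    rw [e]
  | succ d ih =>
    intro k
    have hEq : xAt K c ^ (d + 1) * gP2 K c s1 s2 ^ (d + 1 + 2 + k) =
        s1⁻¹ • (xAt K c ^ d * gP2 K c s1 s2 ^ (d + 2 + k)) +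
        (s1⁻¹ * s2) • (xAt K c ^ d * gP2 K c s1 s2 ^ (d + 2 + (k + 1))) := by
      have h1 : xAt K c ^ (d + 1) * gP2 K c s1 s2 ^ (d + 1 + 2 + k) =
          (xAt K c ^ d * gP2 K c s1 s2 ^ (d + 2 + k)) * (xAt K c * gP2 K c s1 s2) := by
        ring
      rw [h1, xAt_mul_g hc hs1]
      simp only [smul_eq_C_mul]
      ring
    rw [hEq]
    exact add_mem (Submodule.smul_mem _ _ (ih k)) (Submodule.smul_mem _ _ (ih (k + 1)))

lemma xAt_pow_mul_gpow_mem' (hc : s1 * c - s2 ≠ 0) (hs1 : s1 ≠ 0)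
    (d N : ℕ) (h : d + 2 ≤ N) : xAt K c ^ d * gP2 K c s1 s2 ^ N ∈ TP2 K c s1 s2 := by
  obtain ⟨k, rfl⟩ := Nat.exists_eq_add_of_le h
  exact xAt_pow_mul_gpow_mem hc hs1 d k

lemma TP2_integrate (hc : s1 * c - s2 ≠ 0) (hs1 : s1 ≠ 0) {y : K⟦X⟧}
    (hy : y ∈ TP2 K c s1 s2) :
    ∃ w ∈ SP2 K c s1 s2, d⁄dX K w = y := by
  induction hy using Submodule.span_induction with
  | mem z hz =>
    obtain ⟨k, rfl⟩ := hz
    refine ⟨(-(((k : K) + 1) * s1))⁻¹ • gP2 K c s1 s2 ^ (k + 1),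
      Submodule.smul_mem _ _ (Submodule.subset_span ⟨k + 1, rfl⟩), ?_⟩
    have ha : (-(((k : K) + 1) * s1)) ≠ 0 := by
      refine neg_ne_zero.mpr (mul_ne_zero ?_ hs1)
      exact Nat.cast_add_one_ne_zero k
    rw [Derivation.map_smul, derivative_gP2_pow hc, ← smul_eq_C_mul, smul_smul,
      inv_mul_cancel₀ ha, one_smul]
  | zero => exact ⟨0, zero_mem _, map_zero _⟩
  | add a b _ _ ha hb =>
    obtain ⟨w1, hw1, hd1⟩ := ha
    obtain ⟨w2, hw2, hd2⟩ := hb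
    exact ⟨w1 + w2, add_mem hw1 hw2, by rw [map_add, hd1, hd2]⟩
  | smul r a _ ha =>
    obtain ⟨w, hw, hd⟩ := ha
    exact ⟨r • w, Submodule.smul_mem _ _ hw, by rw [Derivation.map_smul, hd]⟩

end Aux
section Mem
variable {K : Type*} [Field K] [CharZero K] {c s1 s2 : K}

lemma A00P2_mem (hc : s1 * c - s2 ≠ 0) (hs1 : s1 ≠ 0) :
    A00P2 K c s1 s2 ∈ TP2 K c s1 s2 := by
  have hz : (9 : K) ≠ 0 := by norm_num
  have hEq : A00P2 K c s1 s2 =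
      (s1 * (s1 * s2 ^ 3) * (9:K)⁻¹) • (xAt K c ^ 0 * gP2 K c s1 s2 ^ 5) +
      (s1 * (-4 * s1 ^ 2 * s2 ^ 2 + 3 * s2 ^ 3) * (9:K)⁻¹) • (xAt K c ^ 1 * gP2 K c s1 s2 ^ 5) +
      (s1 * (-(s1 ^ 3 * s2) + 12 * s1 * s2 ^ 2) * (9:K)⁻¹) • (xAt K c ^ 2 * gP2 K c s1 s2 ^ 5) +
      (s1 * (11 * s1 ^ 4 - 36 * s1 ^ 2 * s2) * (9:K)⁻¹) • (xAt K c ^ 3 * gP2 K c s1 s2 ^ 5) := by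
    rw [A00P2, inv_C_mul_pow hc hz]
    simp only [smul_eq_C_mul, map_mul, map_add, map_sub, map_neg, map_pow, map_ofNat]
    ring
  rw [hEq]
  have hx := xAt_pow_mul_gpow_mem' hc hs1
  exact (add_mem (add_mem (add_mem (Submodule.smul_mem _ _ (hx 0 5 (by norm_num))) (Submodule.smul_mem _ _ (hx 1 5 (by norm_num)))) (Submodule.smul_mem _ _ (hx 2 5 (by norm_num)))) (Submodule.smul_mem _ _ (hx 3 5 (by norm_num))))
lemma A01P2_mem (hc : s1 * c - s2 ≠ 0) (hs1 : s1 ≠ 0) :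
    A01P2 K c s1 s2 * gP2 K c s1 s2 ^ 2 ∈ TP2 K c s1 s2 := by
  have hz : (3 : K) ≠ 0 := by norm_num
  have hEq : A01P2 K c s1 s2 * gP2 K c s1 s2 ^ 2 =
      (-s1 * (s2 ^ 3) * (3:K)⁻¹) • (xAt K c ^ 0 * gP2 K c s1 s2 ^ 6) +
      (-s1 * (-4 * (s1 * s2 ^ 2)) * (3:K)⁻¹) • (xAt K c ^ 1 * gP2 K c s1 s2 ^ 6) +
      (-s1 * (3 * s1 ^ 2 * s2 + 9 * s2 ^ 2) * (3:K)⁻¹) • (xAt K c ^ 2 * gP2 K c s1 s2 ^ 6) +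
      (-s1 * (3 * s1 ^ 3 - 21 * s1 * s2) * (3:K)⁻¹) • (xAt K c ^ 3 * gP2 K c s1 s2 ^ 6) +
      (-s1 * (3 * s1 ^ 2) * (3:K)⁻¹) • (xAt K c ^ 4 * gP2 K c s1 s2 ^ 6) := by
    rw [A01P2, inv_C_mul_pow hc hz]
    simp only [smul_eq_C_mul, map_mul, map_add, map_sub, map_neg, map_pow, map_ofNat]
    ring
  rw [hEq]
  have hx := xAt_pow_mul_gpow_mem' hc hs1
  exact (add_mem (add_mem (add_mem (add_mem (Submodule.smul_mem _ _ (hx 0 6 (by norm_num))) (Submodule.smul_mem _ _ (hx 1 6 (by norm_num)))) (Submodule.smul_mem _ _ (hx 2 6 (by norm_num)))) (Submodule.smul_mem _ _ (hx 3 6 (by norm_num)))) (Submodule.smul_mem _ _ (hx 4 6 (by norm_num))))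
lemma A02P2_mem (hc : s1 * c - s2 ≠ 0) (hs1 : s1 ≠ 0) :
    A02P2 K c s1 s2 * gP2 K c s1 s2 ^ 3 ∈ TP2 K c s1 s2 := by
  have hz : (3 : K) ≠ 0 := by norm_num
  have hEq : A02P2 K c s1 s2 * gP2 K c s1 s2 ^ 3 =
      (-(s2 ^ 3) * (3:K)⁻¹) • (xAt K c ^ 0 * gP2 K c s1 s2 ^ 6) +
      (-(-5 * (s1 * s2 ^ 2)) * (3:K)⁻¹) • (xAt K c ^ 1 * gP2 K c s1 s2 ^ 6) +
      (-(9 * s1 ^ 2 * s2) * (3:K)⁻¹) • (xAt K c ^ 2 * gP2 K c s1 s2 ^ 6) +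
      (-(-6 * s1 ^ 3 - 3 * s1 * s2) * (3:K)⁻¹) • (xAt K c ^ 3 * gP2 K c s1 s2 ^ 6) +
      (-(6 * s1 ^ 2) * (3:K)⁻¹) • (xAt K c ^ 4 * gP2 K c s1 s2 ^ 6) := by
    rw [A02P2, inv_C_mul_pow hc hz]
    simp only [smul_eq_C_mul, map_mul, map_add, map_sub, map_neg, map_pow, map_ofNat]
    ring
  rw [hEq]
  have hx := xAt_pow_mul_gpow_mem' hc hs1
  exact (add_mem (add_mem (add_mem (add_mem (Submodule.smul_mem _ _ (hx 0 6 (by norm_num))) (Submodule.smul_mem _ _ (hx 1 6 (by norm_num)))) (Submodule.smul_mem _ _ (hx 2 6 (by norm_num)))) (Submodule.smul_mem _ _ (hx 3 6 (by norm_num)))) (Submodule.smul_mem _ _ (hx 4 6 (by norm_num))))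
lemma A10P2_mem (hc : s1 * c - s2 ≠ 0) (hs1 : s1 ≠ 0) :
    A10P2 K c s1 s2 ∈ TP2 K c s1 s2 := by
  have hz : (27 : K) ≠ 0 := by norm_num
  have hEq : A10P2 K c s1 s2 =
      (s1 ^ 2 * (8 * s1 ^ 2 * s2 ^ 5 - 21 * s2 ^ 6) * (27:K)⁻¹) • (xAt K c ^ 1 * gP2 K c s1 s2 ^ 9) +
      (s1 ^ 2 * (-48 * s1 ^ 3 * s2 ^ 4 + 126 * s1 * s2 ^ 5) * (27:K)⁻¹) • (xAt K c ^ 2 * gP2 K c s1 s2 ^ 9) +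
      (s1 ^ 2 * (120 * s1 ^ 4 * s2 ^ 3 - 315 * s1 ^ 2 * s2 ^ 4) * (27:K)⁻¹) • (xAt K c ^ 3 * gP2 K c s1 s2 ^ 9) +
      (s1 ^ 2 * (-124 * s1 ^ 5 * s2 ^ 2 + 264 * s1 ^ 3 * s2 ^ 3 + 144 * s1 * s2 ^ 4) * (27:K)⁻¹) • (xAt K c ^ 4 * gP2 K c s1 s2 ^ 9) +
      (s1 ^ 2 * (12 * s1 ^ 6 * s2 + 153 * s1 ^ 4 * s2 ^ 2 - 432 * s1 ^ 2 * s2 ^ 3) * (27:K)⁻¹) • (xAt K c ^ 5 * gP2 K c s1 s2 ^ 9) +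
      (s1 ^ 2 * (60 * s1 ^ 7 - 342 * s1 ^ 5 * s2 + 432 * s1 ^ 3 * s2 ^ 2) * (27:K)⁻¹) • (xAt K c ^ 6 * gP2 K c s1 s2 ^ 9) +
      (s1 ^ 2 * (-33 * s1 ^ 6 + 108 * s1 ^ 4 * s2) * (27:K)⁻¹) • (xAt K c ^ 7 * gP2 K c s1 s2 ^ 9) := by
    rw [A10P2, PP2, inv_C_mul_pow hc hz]
    simp only [smul_eq_C_mul, map_mul, map_add, map_sub, map_neg, map_pow, map_ofNat]
    ring
  rw [hEq]
  have hx := xAt_pow_mul_gpow_mem' hc hs1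
  exact (add_mem (add_mem (add_mem (add_mem (add_mem (add_mem (Submodule.smul_mem _ _ (hx 1 9 (by norm_num))) (Submodule.smul_mem _ _ (hx 2 9 (by norm_num)))) (Submodule.smul_mem _ _ (hx 3 9 (by norm_num)))) (Submodule.smul_mem _ _ (hx 4 9 (by norm_num)))) (Submodule.smul_mem _ _ (hx 5 9 (by norm_num)))) (Submodule.smul_mem _ _ (hx 6 9 (by norm_num)))) (Submodule.smul_mem _ _ (hx 7 9 (by norm_num))))
lemma A11P2_mem (hc : s1 * c - s2 ≠ 0) (hs1 : s1 ≠ 0) :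
    A11P2 K c s1 s2 * gP2 K c s1 s2 ^ 2 ∈ TP2 K c s1 s2 := by
  have hz : (27 : K) ≠ 0 := by norm_num
  have hEq : A11P2 K c s1 s2 * gP2 K c s1 s2 ^ 2 =
      (-s1 * (8 * s1 ^ 2 * s2 ^ 5 - 21 * s2 ^ 6) * (27:K)⁻¹) • (xAt K c ^ 1 * gP2 K c s1 s2 ^ 10) +
      (-s1 * (-48 * s1 ^ 3 * s2 ^ 4 + 126 * s1 * s2 ^ 5) * (27:K)⁻¹) • (xAt K c ^ 2 * gP2 K c s1 s2 ^ 10) +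
      (-s1 * (120 * s1 ^ 4 * s2 ^ 3 - 315 * s1 ^ 2 * s2 ^ 4) * (27:K)⁻¹) • (xAt K c ^ 3 * gP2 K c s1 s2 ^ 10) +
      (-s1 * (-124 * s1 ^ 5 * s2 ^ 2 + 264 * s1 ^ 3 * s2 ^ 3 + 144 * s1 * s2 ^ 4) * (27:K)⁻¹) • (xAt K c ^ 4 * gP2 K c s1 s2 ^ 10) +
      (-s1 * (12 * s1 ^ 6 * s2 + 153 * s1 ^ 4 * s2 ^ 2 - 432 * s1 ^ 2 * s2 ^ 3) * (27:K)⁻¹) • (xAt K c ^ 5 * gP2 K c s1 s2 ^ 10) +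
      (-s1 * (60 * s1 ^ 7 - 342 * s1 ^ 5 * s2 + 432 * s1 ^ 3 * s2 ^ 2) * (27:K)⁻¹) • (xAt K c ^ 6 * gP2 K c s1 s2 ^ 10) +
      (-s1 * (-33 * s1 ^ 6 + 108 * s1 ^ 4 * s2) * (27:K)⁻¹) • (xAt K c ^ 7 * gP2 K c s1 s2 ^ 10) := by
    rw [A11P2, PP2, inv_C_mul_pow hc hz]
    simp only [smul_eq_C_mul, map_mul, map_add, map_sub, map_neg, map_pow, map_ofNat]
    ring
  rw [hEq]
  have hx := xAt_pow_mul_gpow_mem' hc hs1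
  exact (add_mem (add_mem (add_mem (add_mem (add_mem (add_mem (Submodule.smul_mem _ _ (hx 1 10 (by norm_num))) (Submodule.smul_mem _ _ (hx 2 10 (by norm_num)))) (Submodule.smul_mem _ _ (hx 3 10 (by norm_num)))) (Submodule.smul_mem _ _ (hx 4 10 (by norm_num)))) (Submodule.smul_mem _ _ (hx 5 10 (by norm_num)))) (Submodule.smul_mem _ _ (hx 6 10 (by norm_num)))) (Submodule.smul_mem _ _ (hx 7 10 (by norm_num))))
lemma A12P2_mem (hc : s1 * c - s2 ≠ 0) (hs1 : s1 ≠ 0) :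
    A12P2 K c s1 s2 * gP2 K c s1 s2 ^ 3 ∈ TP2 K c s1 s2 := by
  have hz : (9 : K) ≠ 0 := by norm_num
  have hEq : A12P2 K c s1 s2 * gP2 K c s1 s2 ^ 3 =
      (s1 * (-(s2 ^ 6)) * (9:K)⁻¹) • (xAt K c ^ 0 * gP2 K c s1 s2 ^ 10) +
      (s1 * (9 * s1 * s2 ^ 5) * (9:K)⁻¹) • (xAt K c ^ 1 * gP2 K c s1 s2 ^ 10) +
      (s1 * (-32 * s1 ^ 2 * s2 ^ 4 - 9 * s2 ^ 5) * (9:K)⁻¹) • (xAt K c ^ 2 * gP2 K c s1 s2 ^ 10) +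
      (s1 * (57 * s1 ^ 3 * s2 ^ 3 + 60 * s1 * s2 ^ 4) * (9:K)⁻¹) • (xAt K c ^ 3 * gP2 K c s1 s2 ^ 10) +
      (s1 * (-48 * s1 ^ 4 * s2 ^ 2 - 171 * s1 ^ 2 * s2 ^ 3) * (9:K)⁻¹) • (xAt K c ^ 4 * gP2 K c s1 s2 ^ 10) +
      (s1 * (9 * s1 ^ 5 * s2 + 237 * s1 ^ 3 * s2 ^ 2 + 27 * s1 * s2 ^ 3) * (9:K)⁻¹) • (xAt K c ^ 5 * gP2 K c s1 s2 ^ 10) +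
      (s1 * (9 * s1 ^ 6 - 144 * s1 ^ 4 * s2 - 90 * s1 ^ 2 * s2 ^ 2) * (9:K)⁻¹) • (xAt K c ^ 6 * gP2 K c s1 s2 ^ 10) +
      (s1 * (9 * s1 ^ 5 + 108 * s1 ^ 3 * s2) * (9:K)⁻¹) • (xAt K c ^ 7 * gP2 K c s1 s2 ^ 10) +
      (s1 * (-(18 * s1 ^ 4)) * (9:K)⁻¹) • (xAt K c ^ 8 * gP2 K c s1 s2 ^ 10) := by
    rw [A12P2, inv_C_mul_pow hc hz]
    simp only [smul_eq_C_mul, map_mul, map_add, map_sub, map_neg, map_pow, map_ofNat]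
    ring
  rw [hEq]
  have hx := xAt_pow_mul_gpow_mem' hc hs1
  exact (add_mem (add_mem (add_mem (add_mem (add_mem (add_mem (add_mem (add_mem (Submodule.smul_mem _ _ (hx 0 10 (by norm_num))) (Submodule.smul_mem _ _ (hx 1 10 (by norm_num)))) (Submodule.smul_mem _ _ (hx 2 10 (by norm_num)))) (Submodule.smul_mem _ _ (hx 3 10 (by norm_num)))) (Submodule.smul_mem _ _ (hx 4 10 (by norm_num)))) (Submodule.smul_mem _ _ (hx 5 10 (by norm_num)))) (Submodule.smul_mem _ _ (hx 6 10 (by norm_num)))) (Submodule.smul_mem _ _ (hx 7 10 (by norm_num)))) (Submodule.smul_mem _ _ (hx 8 10 (by norm_num))))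
lemma A13P2_mem (hc : s1 * c - s2 ≠ 0) (hs1 : s1 ≠ 0) :
    A13P2 K c s1 s2 * gP2 K c s1 s2 ^ 4 ∈ TP2 K c s1 s2 := by
  have hz : (27 : K) ≠ 0 := by norm_num
  have hEq : A13P2 K c s1 s2 * gP2 K c s1 s2 ^ 4 =
      (-(s2 ^ 6) * (27:K)⁻¹) • (xAt K c ^ 0 * gP2 K c s1 s2 ^ 10) +
      (-(-9 * s1 * s2 ^ 5) * (27:K)⁻¹) • (xAt K c ^ 1 * gP2 K c s1 s2 ^ 10) +
      (-(36 * s1 ^ 2 * s2 ^ 4) * (27:K)⁻¹) • (xAt K c ^ 2 * gP2 K c s1 s2 ^ 10) +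
      (-(-6 * s1 * s2 ^ 4 - 81 * s1 ^ 3 * s2 ^ 3) * (27:K)⁻¹) • (xAt K c ^ 3 * gP2 K c s1 s2 ^ 10) +
      (-(36 * s1 ^ 2 * s2 ^ 3 + 108 * s1 ^ 4 * s2 ^ 2) * (27:K)⁻¹) • (xAt K c ^ 4 * gP2 K c s1 s2 ^ 10) +
      (-(-90 * s1 ^ 3 * s2 ^ 2 - 81 * s1 ^ 5 * s2) * (27:K)⁻¹) • (xAt K c ^ 5 * gP2 K c s1 s2 ^ 10) +
      (-(9 * s1 ^ 2 * s2 ^ 2 + 108 * s1 ^ 4 * s2 + 27 * s1 ^ 6) * (27:K)⁻¹) • (xAt K c ^ 6 * gP2 K c s1 s2 ^ 10) +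
      (-(-27 * s1 ^ 3 * s2 - 54 * s1 ^ 5) * (27:K)⁻¹) • (xAt K c ^ 7 * gP2 K c s1 s2 ^ 10) +
      (-(27 * s1 ^ 4) * (27:K)⁻¹) • (xAt K c ^ 8 * gP2 K c s1 s2 ^ 10) := by
    rw [A13P2, inv_C_mul_pow hc hz]
    simp only [smul_eq_C_mul, map_mul, map_add, map_sub, map_neg, map_pow, map_ofNat]
    ring
  rw [hEq]
  have hx := xAt_pow_mul_gpow_mem' hc hs1
  exact (add_mem (add_mem (add_mem (add_mem (add_mem (add_mem (add_mem (add_mem (Submodule.smul_mem _ _ (hx 0 10 (by norm_num))) (Submodule.smul_mem _ _ (hx 1 10 (by norm_num)))) (Submodule.smul_mem _ _ (hx 2 10 (by norm_num)))) (Submodule.smul_mem _ _ (hx 3 10 (by norm_num)))) (Submodule.smul_mem _ _ (hx 4 10 (by norm_num)))) (Submodule.smul_mem _ _ (hx 5 10 (by norm_num)))) (Submodule.smul_mem _ _ (hx 6 10 (by norm_num)))) (Submodule.smul_mem _ _ (hx 7 10 (by norm_num)))) (Submodule.smul_mem _ _ (hx 8 10 (by norm_num))))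

end Mem
section EuEv
variable {K : Type*} [Field K] [CharZero K] {c s1 s2 : K}

lemma Eu_mem (hc : s1 * c - s2 ≠ 0) (hs1 : s1 ≠ 0) {u : K⟦X⟧} (hu : u ∈ SP2 K c s1 s2) :
    A00P2 K c s1 s2 * u + A01P2 K c s1 s2 * d⁄dX K u +
      A02P2 K c s1 s2 * d⁄dX K (d⁄dX K u) ∈ TP2 K c s1 s2 := by
  induction hu using Submodule.span_induction with
  | mem z hz =>
    obtain ⟨m, rfl⟩ := hz
    cases m with
    | zero =>
      simp only [pow_zero, Derivation.map_one_eq_zero, mul_zero, map_zero, add_zero, mul_one]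
      exact A00P2_mem hc hs1
    | succ m =>
      have d1 : d⁄dX K (gP2 K c s1 s2 ^ (m + 1)) =
          PowerSeries.C (R := K) (-(((m : K) + 1) * s1)) * gP2 K c s1 s2 ^ (m + 1 + 1) :=
        derivative_gP2_pow hc m
      have d2 : d⁄dX K (d⁄dX K (gP2 K c s1 s2 ^ (m + 1))) =
          PowerSeries.C (R := K) (-(((m : K) + 1) * s1)) *
            (PowerSeries.C (R := K) (-((((m + 1 : ℕ) : K)) + 1) * s1) * gP2 K c s1 s2 ^ (m + 1 + 1 + 1)) := by
        rw [d1, derivative_C_mul, derivative_gP2_pow hc (m + 1)]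
        simp only [map_neg, map_mul, map_add, map_one, map_natCast]
        ring
      rw [d2, d1]
      have hEq : A00P2 K c s1 s2 * gP2 K c s1 s2 ^ (m + 1) +
          A01P2 K c s1 s2 *
            (PowerSeries.C (R := K) (-(((m : K) + 1) * s1)) * gP2 K c s1 s2 ^ (m + 1 + 1)) +
          A02P2 K c s1 s2 *
            (PowerSeries.C (R := K) (-(((m : K) + 1) * s1)) *
              (PowerSeries.C (R := K) (-((((m + 1 : ℕ) : K)) + 1) * s1) * gP2 K c s1 s2 ^ (m + 1 + 1 + 1))) =
          A00P2 K c s1 s2 * gP2 K c s1 s2 ^ (m + 1) +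
          (-(((m : K) + 1) * s1)) • (A01P2 K c s1 s2 * gP2 K c s1 s2 ^ 2 * gP2 K c s1 s2 ^ m) +
          ((-(((m : K) + 1) * s1)) * (-((((m : K) + 1) + 1) * s1))) •
            (A02P2 K c s1 s2 * gP2 K c s1 s2 ^ 3 * gP2 K c s1 s2 ^ m) := by
        simp only [smul_eq_C_mul, map_mul, map_neg, map_add, map_one, map_natCast,
          Nat.cast_add, Nat.cast_one]
        ring
      rw [hEq]
      exact add_mem (add_mem (TP2_mul_gpow (A00P2_mem hc hs1) (m + 1))
        (Submodule.smul_mem _ _ (TP2_mul_gpow (A01P2_mem hc hs1) m)))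
        (Submodule.smul_mem _ _ (TP2_mul_gpow (A02P2_mem hc hs1) m))
  | zero =>
    simp only [mul_zero, map_zero, add_zero]
    exact zero_mem _
  | add x y _ _ px py =>
    have hEq : A00P2 K c s1 s2 * (x + y) + A01P2 K c s1 s2 * d⁄dX K (x + y) +
        A02P2 K c s1 s2 * d⁄dX K (d⁄dX K (x + y)) =
        (A00P2 K c s1 s2 * x + A01P2 K c s1 s2 * d⁄dX K x +
          A02P2 K c s1 s2 * d⁄dX K (d⁄dX K x)) +
        (A00P2 K c s1 s2 * y + A01P2 K c s1 s2 * d⁄dX K y +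
          A02P2 K c s1 s2 * d⁄dX K (d⁄dX K y)) := by
      simp only [map_add]; ring
    rw [hEq]; exact add_mem px py
  | smul r x _ px =>
    have hEq : A00P2 K c s1 s2 * (r • x) + A01P2 K c s1 s2 * d⁄dX K (r • x) +
        A02P2 K c s1 s2 * d⁄dX K (d⁄dX K (r • x)) =
        r • (A00P2 K c s1 s2 * x + A01P2 K c s1 s2 * d⁄dX K x +
          A02P2 K c s1 s2 * d⁄dX K (d⁄dX K x)) := by
      simp only [Derivation.map_smul, smul_eq_C_mul, derivative_C_mul]; ring
    rw [hEq]; exact Submodule.smul_mem _ _ px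

lemma Ev_mem (hc : s1 * c - s2 ≠ 0) (hs1 : s1 ≠ 0) {v : K⟦X⟧} (hv : v ∈ SP2 K c s1 s2) :
    A10P2 K c s1 s2 * v + A11P2 K c s1 s2 * d⁄dX K v +
      A12P2 K c s1 s2 * d⁄dX K (d⁄dX K v) +
      A13P2 K c s1 s2 * d⁄dX K (d⁄dX K (d⁄dX K v)) ∈ TP2 K c s1 s2 := by
  induction hv using Submodule.span_induction with
  | mem z hz =>
    obtain ⟨m, rfl⟩ := hz
    cases m with
    | zero =>
      simp only [pow_zero, Derivation.map_one_eq_zero, mul_zero, map_zero, add_zero, mul_one]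
      exact A10P2_mem hc hs1
    | succ m =>
      have d1 : d⁄dX K (gP2 K c s1 s2 ^ (m + 1)) =
          PowerSeries.C (R := K) (-(((m : K) + 1) * s1)) * gP2 K c s1 s2 ^ (m + 1 + 1) :=
        derivative_gP2_pow hc m
      have d2 : d⁄dX K (d⁄dX K (gP2 K c s1 s2 ^ (m + 1))) =
          PowerSeries.C (R := K) (-(((m : K) + 1) * s1)) *
            (PowerSeries.C (R := K) (-((((m + 1 : ℕ) : K)) + 1) * s1) * gP2 K c s1 s2 ^ (m + 1 + 1 + 1)) := by
        rw [d1, derivative_C_mul, derivative_gP2_pow hc (m + 1)]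
        simp only [map_neg, map_mul, map_add, map_one, map_natCast]
        ring
      have d3 : d⁄dX K (d⁄dX K (d⁄dX K (gP2 K c s1 s2 ^ (m + 1)))) =
          PowerSeries.C (R := K) (-(((m : K) + 1) * s1)) *
            (PowerSeries.C (R := K) (-((((m + 1 : ℕ) : K)) + 1) * s1) *
              (PowerSeries.C (R := K) (-((((m + 1 + 1 : ℕ) : K)) + 1) * s1) *
                gP2 K c s1 s2 ^ (m + 1 + 1 + 1 + 1))) := by
        rw [d2, derivative_C_mul, derivative_C_mul, derivative_gP2_pow hc (m + 1 + 1)]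
        simp only [map_neg, map_mul, map_add, map_one, map_natCast]
        ring
      rw [d3, d2, d1]
      have hEq : A10P2 K c s1 s2 * gP2 K c s1 s2 ^ (m + 1) +
          A11P2 K c s1 s2 *
            (PowerSeries.C (R := K) (-(((m : K) + 1) * s1)) * gP2 K c s1 s2 ^ (m + 1 + 1)) +
          A12P2 K c s1 s2 *
            (PowerSeries.C (R := K) (-(((m : K) + 1) * s1)) *
              (PowerSeries.C (R := K) (-((((m + 1 : ℕ) : K)) + 1) * s1) * gP2 K c s1 s2 ^ (m + 1 + 1 + 1))) +
          A13P2 K c s1 s2 *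
            (PowerSeries.C (R := K) (-(((m : K) + 1) * s1)) *
              (PowerSeries.C (R := K) (-((((m + 1 : ℕ) : K)) + 1) * s1) *
                (PowerSeries.C (R := K) (-((((m + 1 + 1 : ℕ) : K)) + 1) * s1) *
                  gP2 K c s1 s2 ^ (m + 1 + 1 + 1 + 1)))) =
          A10P2 K c s1 s2 * gP2 K c s1 s2 ^ (m + 1) +
          (-(((m : K) + 1) * s1)) • (A11P2 K c s1 s2 * gP2 K c s1 s2 ^ 2 * gP2 K c s1 s2 ^ m) +
          ((-(((m : K) + 1) * s1)) * (-((((m : K) + 1) + 1) * s1))) •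
            (A12P2 K c s1 s2 * gP2 K c s1 s2 ^ 3 * gP2 K c s1 s2 ^ m) +
          ((-(((m : K) + 1) * s1)) * (-((((m : K) + 1) + 1) * s1)) *
              (-((((m : K) + 1 + 1) + 1) * s1))) •
            (A13P2 K c s1 s2 * gP2 K c s1 s2 ^ 4 * gP2 K c s1 s2 ^ m) := by
        simp only [smul_eq_C_mul, map_mul, map_neg, map_add, map_one, map_natCast,
          Nat.cast_add, Nat.cast_one]
        ring
      rw [hEq]
      exact add_mem (add_mem (add_mem (TP2_mul_gpow (A10P2_mem hc hs1) (m + 1))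
        (Submodule.smul_mem _ _ (TP2_mul_gpow (A11P2_mem hc hs1) m)))
        (Submodule.smul_mem _ _ (TP2_mul_gpow (A12P2_mem hc hs1) m)))
        (Submodule.smul_mem _ _ (TP2_mul_gpow (A13P2_mem hc hs1) m))
  | zero =>
    simp only [mul_zero, map_zero, add_zero]
    exact zero_mem _
  | add x y _ _ px py =>
    have hEq : A10P2 K c s1 s2 * (x + y) + A11P2 K c s1 s2 * d⁄dX K (x + y) +
        A12P2 K c s1 s2 * d⁄dX K (d⁄dX K (x + y)) +
        A13P2 K c s1 s2 * d⁄dX K (d⁄dX K (d⁄dX K (x + y))) =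
        (A10P2 K c s1 s2 * x + A11P2 K c s1 s2 * d⁄dX K x +
          A12P2 K c s1 s2 * d⁄dX K (d⁄dX K x) +
          A13P2 K c s1 s2 * d⁄dX K (d⁄dX K (d⁄dX K x))) +
        (A10P2 K c s1 s2 * y + A11P2 K c s1 s2 * d⁄dX K y +
          A12P2 K c s1 s2 * d⁄dX K (d⁄dX K y) +
          A13P2 K c s1 s2 * d⁄dX K (d⁄dX K (d⁄dX K y))) := by
      simp only [map_add]; ring
    rw [hEq]; exact add_mem px py
  | smul r x _ px =>
    have hEq : A10P2 K c s1 s2 * (r • x) + A11P2 K c s1 s2 * d⁄dX K (r • x) +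
        A12P2 K c s1 s2 * d⁄dX K (d⁄dX K (r • x)) +
        A13P2 K c s1 s2 * d⁄dX K (d⁄dX K (d⁄dX K (r • x))) =
        r • (A10P2 K c s1 s2 * x + A11P2 K c s1 s2 * d⁄dX K x +
          A12P2 K c s1 s2 * d⁄dX K (d⁄dX K x) +
          A13P2 K c s1 s2 * d⁄dX K (d⁄dX K (d⁄dX K x))) := by
      simp only [Derivation.map_smul, smul_eq_C_mul, derivative_C_mul]; ring
    rw [hEq]; exact Submodule.smul_mem _ _ px

end EuEv
/-- **Admissibility of the local `ℙ²` differential system under the specialization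
`s₂² = 3s₁s₃`.**  Let `K` be a field of characteristic zero, `λ₀, λ₁, λ₂ ∈ K` pairwise
distinct and nonzero with `s₁ ≠ 0` and `s₂² = 3s₁s₃`.  Since `s₁λᵢ - s₂ ≠ 0`, the ring
`K[x][(s₁x - s₂)⁻¹]` embeds into `K[[x - λᵢ]]`, modelled as `K[[X]]` with `x = λᵢ + X`.
Then for any sequence `(Φ_p)_{p ∈ ℤ}` with `Φ₀ = 1`, `Φ_j = 0` for `j < 0`, satisfying
for all `p ≥ 1` the recursion
`dΦ_p/dx = A₀₀Φ_{p-1} + A₀₁Φ'_{p-1} + A₀₂Φ''_{p-1} + A₁₀Φ_{p-2} + A₁₁Φ'_{p-2}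
 + A₁₂Φ''_{p-2} + A₁₃Φ'''_{p-2}`,
every `Φ_p` lies in the subring `K[x][(s₁x - s₂)⁻¹]` of `K[[x - λᵢ]]`. -/
theorem admissible_system_localP2
    (K : Type*) [Field K] [CharZero K]
    (lam : Fin 3 → K) (hnz : ∀ j, lam j ≠ 0) (hdist : Function.Injective lam) (i : Fin 3)
    (s1 s2 s3 : K)
    (hs1 : s1 = lam 0 + lam 1 + lam 2)
    (hs2 : s2 = lam 0 * lam 1 + lam 1 * lam 2 + lam 2 * lam 0)
    (hs3 : s3 = lam 0 * lam 1 * lam 2)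
    (hs1ne : s1 ≠ 0) (hspec : s2 ^ 2 = 3 * s1 * s3)
    (Φ : ℤ → K⟦X⟧) (hΦ0 : Φ 0 = 1) (hΦneg : ∀ j : ℤ, j < 0 → Φ j = 0)
    (hrec : ∀ p : ℤ, 1 ≤ p →
      PowerSeries.derivative K (Φ p) =
        A00P2 K (lam i) s1 s2 * Φ (p - 1) +
        A01P2 K (lam i) s1 s2 * PowerSeries.derivative K (Φ (p - 1)) +
        A02P2 K (lam i) s1 s2 *
          (⇑(PowerSeries.derivative K))^[2] (Φ (p - 1)) +
        A10P2 K (lam i) s1 s2 * Φ (p - 2) +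
        A11P2 K (lam i) s1 s2 * PowerSeries.derivative K (Φ (p - 2)) +
        A12P2 K (lam i) s1 s2 *
          (⇑(PowerSeries.derivative K))^[2] (Φ (p - 2)) +
        A13P2 K (lam i) s1 s2 *
          (⇑(PowerSeries.derivative K))^[3] (Φ (p - 2))) :
    ∀ p : ℤ, Φ p ∈
      Algebra.adjoin K {xAt K (lam i), (fP2 K (lam i) s1 s2)⁻¹} := by
  -- ` s₁λᵢ - s₂ ≠ 0 `
  have h01 : lam 0 ≠ lam 1 := fun h => absurd (hdist h) (by decide)
  have h02 : lam 0 ≠ lam 2 := fun h => absurd (hdist h) (by decide)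
  have h12 : lam 1 ≠ lam 2 := fun h => absurd (hdist h) (by decide)
  have hc : s1 * lam i - s2 ≠ 0 := by
    have h3 : i = 0 ∨ i = 1 ∨ i = 2 := by fin_cases i <;> decide
    rcases h3 with rfl | rfl | rfl
    · have e : (s1 * lam 0 - s2) ^ 2 = s1 * lam 0 * ((lam 0 - lam 1) * (lam 0 - lam 2)) := by
        subst hs1 hs2 hs3
        linear_combination hspec
      intro h
      refine mul_ne_zero (mul_ne_zero hs1ne (hnz 0))
        (mul_ne_zero (sub_ne_zero.2 h01) (sub_ne_zero.2 h02)) ?_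
      rw [← e, h]; norm_num
    · have e : (s1 * lam 1 - s2) ^ 2 = s1 * lam 1 * ((lam 1 - lam 0) * (lam 1 - lam 2)) := by
        subst hs1 hs2 hs3
        linear_combination hspec
      intro h
      refine mul_ne_zero (mul_ne_zero hs1ne (hnz 1))
        (mul_ne_zero (sub_ne_zero.2 (Ne.symm h01)) (sub_ne_zero.2 h12)) ?_
      rw [← e, h]; norm_num
    · have e : (s1 * lam 2 - s2) ^ 2 = s1 * lam 2 * ((lam 2 - lam 0) * (lam 2 - lam 1)) := by
        subst hs1 hs2 hs3
        linear_combination hspec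
      intro h
      refine mul_ne_zero (mul_ne_zero hs1ne (hnz 2))
        (mul_ne_zero (sub_ne_zero.2 (Ne.symm h02)) (sub_ne_zero.2 (Ne.symm h12))) ?_
      rw [← e, h]; norm_num
  -- main induction: `Φ p ∈ SP2`
  have main : ∀ n : ℕ, Φ (n : ℤ) ∈ SP2 K (lam i) s1 s2 := by
    intro n
    induction n using Nat.strong_induction_on with
    | _ n IH =>
      match n with
      | 0 =>
        rw [Nat.cast_zero, hΦ0]
        exact one_mem_SP2
      | (m + 1) =>
        have hp : (1 : ℤ) ≤ ((m + 1 : ℕ) : ℤ) := by push_cast; omega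
        have hd := hrec ((m + 1 : ℕ) : ℤ) hp
        have e1 : ((m + 1 : ℕ) : ℤ) - 1 = ((m : ℕ) : ℤ) := by push_cast; ring
        have e2 : ((m + 1 : ℕ) : ℤ) - 2 = ((m : ℕ) : ℤ) - 1 := by push_cast; ring
        rw [e1, e2] at hd
        have hit2 : ∀ y : K⟦X⟧, (⇑(PowerSeries.derivative K))^[2] y =
            d⁄dX K (d⁄dX K y) := fun y => rfl
        have hit3 : ∀ y : K⟦X⟧, (⇑(PowerSeries.derivative K))^[3] y =
            d⁄dX K (d⁄dX K (d⁄dX K y)) := fun y => rfl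
        rw [hit2, hit2, hit3] at hd
        have hu : Φ ((m : ℕ) : ℤ) ∈ SP2 K (lam i) s1 s2 := IH m (by omega)
        have hv : Φ (((m : ℕ) : ℤ) - 1) ∈ SP2 K (lam i) s1 s2 := by
          match m with
          | 0 =>
            have e : ((0 : ℕ) : ℤ) - 1 = -1 := by norm_num
            rw [e, hΦneg (-1) (by norm_num)]
            exact zero_mem _
          | (k + 1) =>
            have e : ((k + 1 : ℕ) : ℤ) - 1 = ((k : ℕ) : ℤ) := by push_cast; ring
            rw [e]
            exact IH k (by omega)
        have hgroup : ∀ t1 t2 t3 t4 t5 t6 t7 : K⟦X⟧,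
            t1 + t2 + t3 + t4 + t5 + t6 + t7 = (t1 + t2 + t3) + (t4 + t5 + t6 + t7) := by
          intros; ring
        rw [hgroup] at hd
        have hmem : d⁄dX K (Φ ((m + 1 : ℕ) : ℤ)) ∈ TP2 K (lam i) s1 s2 := by
          rw [hd]
          exact add_mem (Eu_mem hc hs1ne hu) (Ev_mem hc hs1ne hv)
        obtain ⟨w, hwS, hwd⟩ := TP2_integrate hc hs1ne hmem
        have heq : Φ ((m + 1 : ℕ) : ℤ) = w +
            PowerSeries.C (R := K) (constantCoeff (R := K) (Φ ((m + 1 : ℕ) : ℤ)) - constantCoeff (R := K) w) := by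
          apply derivative.ext
          · rw [map_add, derivative_C, add_zero, hwd]
          · simp only [map_add, constantCoeff_C]
            ring
        rw [heq]
        exact add_mem hwS (C_mem_SP2 _)
  -- conclude
  have hadj : ∀ y, y ∈ SP2 K (lam i) s1 s2 →
      y ∈ Algebra.adjoin K {xAt K (lam i), (fP2 K (lam i) s1 s2)⁻¹} := by
    have hg : (fP2 K (lam i) s1 s2)⁻¹ ∈
        Algebra.adjoin K {xAt K (lam i), (fP2 K (lam i) s1 s2)⁻¹} :=
      Algebra.subset_adjoin (Set.mem_insert_iff.2 (Or.inr rfl))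
    have hgp : ∀ k : ℕ, gP2 K (lam i) s1 s2 ^ k ∈
        Algebra.adjoin K {xAt K (lam i), (fP2 K (lam i) s1 s2)⁻¹} := by
      intro k
      have : gP2 K (lam i) s1 s2 = (fP2 K (lam i) s1 s2)⁻¹ := rfl
      rw [this]
      exact pow_mem hg k
    intro y hy
    induction hy using Submodule.span_induction with
    | mem z hz =>
      obtain ⟨k, hk⟩ := hz
      rw [← hk]
      exact hgp k
    | zero => exact zero_mem _
    | add a b _ _ pa pb => exact add_mem pa pb
    | smul r a _ pa => exact Subalgebra.smul_mem _ pa r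
  intro p
  rcases lt_or_ge p 0 with hneg | hpos
  · rw [hΦneg p hneg]
    exact zero_mem _
  · lift p to ℕ using hpos with n
    exact hadj _ (main n)

end
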